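/- Let H = ℝ^n, S skew-adjoint, L symmetric, N : H → ℝ with gradient map N'. Given zⁿ, z̃ ∈ H, Δt > 0, and λ ∈ ℝ, suppose z^{n+1} ∈ H satisfies (z^{n+1} - zⁿ)/Δt = S(L((zⁿ + z^{n+1})/2) + λ • N'(z̃)) and N(z^{n+1}) - N(zⁿ) = λ * ⟪N'(z̃), z^{n+1} - zⁿ⟫. Then (1/2)⟪z^{n+1}, L z^{n+1}⟫ + N(z^{n+1}) = (1/2)⟪zⁿ, L zⁿ⟫ + N(zⁿ). -/

import Mathlib

open scoped RealInnerProductSpace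

/-- Discrete original-energy conservation of the LM-CN scheme. -/
theorem stmt2 {n : ℕ}
    (S L : EuclideanSpace ℝ (Fin n) →L[ℝ] EuclideanSpace ℝ (Fin n))
    (hS : ∀ x y, ⟪S x, y⟫ = -⟪x, S y⟫)
    (hL : ∀ x y, ⟪L x, y⟫ = ⟪x, L y⟫)
    (N : EuclideanSpace ℝ (Fin n) → ℝ)
    (N' : EuclideanSpace ℝ (Fin n) → EuclideanSpace ℝ (Fin n))
    (hN : ∀ x, HasGradientAt N (N' x) x)
    (zn zn1 zt : EuclideanSpace ℝ (Fin n)) (Δt lam : ℝ) (hΔt : 0 < Δt)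
    (hupd : (Δt)⁻¹ • (zn1 - zn)
      = S (L ((1 / 2 : ℝ) • (zn + zn1)) + lam • N' zt))
    (henergy : N zn1 - N zn = lam * ⟪N' zt, zn1 - zn⟫) :
    (1 / 2 : ℝ) * ⟪zn1, L zn1⟫ + N zn1 = (1 / 2 : ℝ) * ⟪zn, L zn⟫ + N zn := by
  set w : EuclideanSpace ℝ (Fin n) := L ((1 / 2 : ℝ) • (zn + zn1)) + lam • N' zt with hw
  have hSw : ⟪S w, w⟫ = 0 := by
    have h1 := hS w w
    have h2 : ⟪S w, w⟫ = ⟪w, S w⟫ := real_inner_comm _ _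
    linarith [h1, h2]
  have h0 : ⟪zn1 - zn, w⟫ = 0 := by
    have := congrArg (fun v => ⟪v, w⟫) hupd
    simp only [inner_smul_left] at this
    have hne : (Δt)⁻¹ ≠ 0 := inv_ne_zero hΔt.ne'
    rw [hSw] at this
    field_simp at this
    exact (mul_eq_zero.mp this).resolve_left (by simp [hΔt.ne'])
  have hexp : ⟪zn1 - zn, w⟫
      = (1 / 2 : ℝ) * ⟪zn1, L zn1⟫ - (1 / 2 : ℝ) * ⟪zn, L zn⟫
        + lam * ⟪N' zt, zn1 - zn⟫ := by
    have hcross : ⟪zn1, L zn⟫ = ⟪zn, L zn1⟫ := by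
      rw [← hL zn zn1, real_inner_comm]
    simp only [hw, inner_add_right, inner_sub_left, map_smul, map_add,
      inner_smul_right, inner_add_right]
    have h3 : ⟪N' zt, zn1 - zn⟫ = ⟪zn1, N' zt⟫ - ⟪zn, N' zt⟫ := by
      rw [inner_sub_right, real_inner_comm (N' zt) zn1, real_inner_comm (N' zt) zn]
    rw [h3]
    ring_nf
    nlinarith [hcross]
  rw [h0] at hexp
  linarith [henergy, hexp]
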